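/- Let X be a finite set, let C be a cluster system for X, and let p be an integer such that |⋃C'| ≥ |C'| + p holds for every non-empty subcollection C' ⊆ C. Then the collection D of all non-empty subcollections C' ⊆ C with |⋃C'| = |C'| + p is a patchwork on the ground set C; that is, whenever C', C'' ∈ D satisfy C' ∩ C'' ∉ {∅, C', C''}, both C' ∩ C'' and C' ∪ C'' belong to D. -/

import Mathlib

/-- If `|⋃C'| ≥ |C'| + p` for every non-empty subcollection `C'` of a cluster system `C`,
then the collection of non-empty subcollections achieving equality is a patchwork on
the ground set `C`. -/
theorem stmt4 {α : Type*} [Fintype α] [DecidableEq α]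
    (C : Finset (Finset α)) (hC : ∀ A ∈ C, A.Nonempty) (p : ℤ)
    (h : ∀ C' ⊆ C, C'.Nonempty → (C'.card : ℤ) + p ≤ ((C'.sup id).card : ℤ)) :
    ∀ C' ∈ {D : Finset (Finset α) | D ⊆ C ∧ D.Nonempty ∧
        ((D.sup id).card : ℤ) = (D.card : ℤ) + p},
    ∀ C'' ∈ {D : Finset (Finset α) | D ⊆ C ∧ D.Nonempty ∧
        ((D.sup id).card : ℤ) = (D.card : ℤ) + p},
      ¬(C' ∩ C'' = ∅ ∨ C' ∩ C'' = C' ∨ C' ∩ C'' = C'') →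
      (C' ∩ C'' ∈ {D : Finset (Finset α) | D ⊆ C ∧ D.Nonempty ∧
          ((D.sup id).card : ℤ) = (D.card : ℤ) + p} ∧
       C' ∪ C'' ∈ {D : Finset (Finset α) | D ⊆ C ∧ D.Nonempty ∧
          ((D.sup id).card : ℤ) = (D.card : ℤ) + p}) := by
  intro C' hC' C'' hC'' hinc
  simp only [Set.mem_setOf_eq] at *
  obtain ⟨hs1, hn1, he1⟩ := hC'
  obtain ⟨hs2, hn2, he2⟩ := hC''
  push_neg at hinc
  have hint_ne : (C' ∩ C'').Nonempty :=
    hinc.1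
  have hun_ne : (C' ∪ C'').Nonempty := hn1.mono Finset.subset_union_left
  have hint_sub : C' ∩ C'' ⊆ C := fun x hx =>
    hs1 (Finset.mem_of_mem_inter_left hx)
  have hun_sub : C' ∪ C'' ⊆ C := Finset.union_subset hs1 hs2
  -- card identity for finsets
  have hcard : (C' ∩ C'').card + (C' ∪ C'').card = C'.card + C''.card := by
    rw [add_comm]
    exact Finset.card_union_add_card_inter C' C''
  -- sup of union is union of sups
  have hsupu : (C' ∪ C'').sup id = C'.sup id ∪ C''.sup id := by
    rw [Finset.sup_union, Finset.sup_eq_union]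
  -- sup of intersection is contained in intersection of sups
  have hsupi : (C' ∩ C'').sup id ⊆ C'.sup id ∩ C''.sup id := by
    apply Finset.subset_inter
    · show (C' ∩ C'').sup id ≤ C'.sup id
      exact Finset.sup_mono Finset.inter_subset_left
    · show (C' ∩ C'').sup id ≤ C''.sup id
      exact Finset.sup_mono Finset.inter_subset_right
  have h1 := h _ hint_sub hint_ne
  have h2 := h _ hun_sub hun_ne
  have hcard2 : ((C' ∩ C'').sup id).card + ((C' ∪ C'').sup id).card
      ≤ (C'.sup id).card + (C''.sup id).card := by
    have := Finset.card_le_card hsupi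
    have h3 : ((C' ∪ C'').sup id).card ≤ (C'.sup id ∪ C''.sup id).card := by
      rw [hsupu]
    have h4 : (C'.sup id ∩ C''.sup id).card + (C'.sup id ∪ C''.sup id).card
        = (C'.sup id).card + (C''.sup id).card := by
      rw [add_comm]; exact Finset.card_union_add_card_inter _ _
    omega
  refine ⟨⟨hint_sub, hint_ne, ?_⟩, ⟨hun_sub, hun_ne, ?_⟩⟩ <;>
  · push_cast at *
    omega
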